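/- There exists an absolute constant C > 0 with the following property. Let ε > 0 and let b, b' : [0,∞) → ℝ² be trajectories of the centers of two unit discs, each continuous, piecewise linear and Lipschitz with constant 1, satisfying |b(s) − b'(s)| ≥ 2 for all s ≥ 0. Let w1 = (−√3/2, 1/2) and u1 = (1/2, √3/2), and assume |u1·b(0)| ≤ ε and |u1·b'(0)| ≤ ε, and that w1·(b'(0) − b(0)) − 2 ≤ ε. Suppose the two discs collide elastically at time εt for some t ≥ 0, i.e., |b(εt) − b'(εt)| = 2 and, with x = b(εt) − b'(εt), the right derivatives satisfy Db(εt) = Db(εt−) − (1/4)(D(b − b')(εt−)·x)·x and Db'(εt) = Db'(εt−) + (1/4)(D(b − b')(εt−)·x)·x. Then |w1·Db(εt) − w1·Db'(εt−)| ≤ C·ε·(1+t) and |w1·Db'(εt) − w1·Db(εt−)| ≤ C·ε·(1+t); that is, at the collision the w1-components of the two velocities are exchanged up to an error of order ε(1+t). -/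

import Mathlib

open scoped RealInnerProductSpace

noncomputable section

/-- The unit vector `w1 = (-√3/2, 1/2)`. -/
def w1 : EuclideanSpace ℝ (Fin 2) :=
  (EuclideanSpace.equiv (Fin 2) ℝ).symm ![-(Real.sqrt 3 / 2), 1 / 2]

/-- The unit vector `u1 = (1/2, √3/2)`. -/
def u1 : EuclideanSpace ℝ (Fin 2) :=
  (EuclideanSpace.equiv (Fin 2) ℝ).symm ![1 / 2, Real.sqrt 3 / 2]

lemma inner_w1_w1 : ⟪w1, w1⟫ = (1:ℝ) := by
  rw [PiLp.inner_apply]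
  simp [w1, PiLp.inner_apply, Fin.sum_univ_two]
  nlinarith [Real.sq_sqrt (by norm_num : (3:ℝ) ≥ 0)]

lemma inner_u1_u1 : ⟪u1, u1⟫ = (1:ℝ) := by
  rw [PiLp.inner_apply]
  simp [u1, PiLp.inner_apply, Fin.sum_univ_two]
  nlinarith [Real.sq_sqrt (by norm_num : (3:ℝ) ≥ 0)]

lemma norm_u1 : ‖u1‖ = 1 := by
  have h : ‖u1‖ ^ 2 = 1 := by rw [← real_inner_self_eq_norm_sq]; exact inner_u1_u1
  nlinarith [norm_nonneg u1]

lemma parseval (y : EuclideanSpace ℝ (Fin 2)) : ⟪w1, y⟫ ^ 2 + ⟪u1, y⟫ ^ 2 = ⟪y, y⟫ := by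
  rw [PiLp.inner_apply y y]
  simp [w1, u1, PiLp.inner_apply, Fin.sum_univ_two]
  nlinarith [Real.sq_sqrt (by norm_num : (3:ℝ) ≥ 0)]

lemma vel_norm_le {b : ℝ → EuclideanSpace ℝ (Fin 2)} {v : EuclideanSpace ℝ (Fin 2)} {T : ℝ}
    (hT : 0 ≤ T) (hl : LipschitzOnWith 1 b (Set.Ici 0))
    (h : ∃ η > 0, ∀ s ∈ Set.Icc T (T + η), b s = b T + (s - T) • v) : ‖v‖ ≤ 1 := by
  obtain ⟨η, hη, hlin⟩ := h
  have hs := hlin (T + η) ⟨by linarith, le_refl _⟩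
  have hd := (lipschitzOnWith_iff_dist_le_mul.mp hl) (T + η)
    (by simp [Set.mem_Ici]; linarith) T (by simpa [Set.mem_Ici] using hT)
  rw [dist_eq_norm, hs] at hd
  have : ‖(T + η - T) • v‖ ≤ 1 * dist (T + η) T := by
    simpa [add_sub_cancel_left] using hd
  rw [norm_smul, Real.norm_eq_abs, Real.dist_eq] at this
  simp only [add_sub_cancel_left] at this
  rw [abs_of_pos hη] at this
  nlinarith [hη]
set_option maxHeartbeats 1000000 in
/-- There is an absolute constant `C > 0` such that whenever two unit
discs with `1`-Lipschitz, continuous piecewise linear center trajectories `b, b'` on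
`[0,∞)` (with right derivatives `vb, vb'` and left derivatives -- left limits of the
right derivatives -- `wb, wb'`), whose `u1`-components are initially at most `ε` in
absolute value and whose initial `w1`-gap is at most `ε`, collide elastically at a time
`ε t` with `t ≥ 0`, the `w1`-components of the velocities are exchanged at the collision
up to an error of at most `C ε (1+t)`. -/
theorem velocities_exchanged_up_to_error :
    ∃ C : ℝ, 0 < C ∧ ∀ ε : ℝ, 0 < ε →
      ∀ b b' vb vb' wb wb' : ℝ → EuclideanSpace ℝ (Fin 2),
      -- continuity and piecewise linearity on `[0,∞)`, with one-sided derivatives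
      (ContinuousOn b (Set.Ici 0)) → (ContinuousOn b' (Set.Ici 0)) →
      (∀ t : ℝ, 0 ≤ t → ∃ η > 0, ∀ s ∈ Set.Icc t (t + η),
        b s = b t + (s - t) • vb t) →
      (∀ t : ℝ, 0 ≤ t → ∃ η > 0, ∀ s ∈ Set.Icc (t - η) t ∩ Set.Ici 0,
        b s = b t + (s - t) • wb t) →
      (∀ t : ℝ, 0 ≤ t → ∃ η > 0, ∀ s ∈ Set.Icc t (t + η),
        b' s = b' t + (s - t) • vb' t) →
      (∀ t : ℝ, 0 ≤ t → ∃ η > 0, ∀ s ∈ Set.Icc (t - η) t ∩ Set.Ici 0,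
        b' s = b' t + (s - t) • wb' t) →
      -- `1`-Lipschitz trajectories of non-overlapping unit discs
      LipschitzOnWith 1 b (Set.Ici 0) → LipschitzOnWith 1 b' (Set.Ici 0) →
      (∀ s : ℝ, 0 ≤ s → 2 ≤ ‖b s - b' s‖) →
      -- initial conditions
      |⟪u1, b 0⟫| ≤ ε → |⟪u1, b' 0⟫| ≤ ε → ⟪w1, b' 0 - b 0⟫ - 2 ≤ ε →
      -- elastic collision at time `ε t`
      ∀ t : ℝ, 0 ≤ t → ‖b (ε * t) - b' (ε * t)‖ = 2 →
      vb (ε * t) = wb (ε * t) -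
        ((4⁻¹ : ℝ) * ⟪wb (ε * t) - wb' (ε * t), b (ε * t) - b' (ε * t)⟫) •
          (b (ε * t) - b' (ε * t)) →
      vb' (ε * t) = wb' (ε * t) +
        ((4⁻¹ : ℝ) * ⟪wb (ε * t) - wb' (ε * t), b (ε * t) - b' (ε * t)⟫) •
          (b (ε * t) - b' (ε * t)) →
      -- conclusion: the `w1`-components of the velocities are exchanged up to
      -- an error of order `ε (1 + t)`
      |⟪w1, vb (ε * t)⟫ - ⟪w1, wb' (ε * t)⟫| ≤ C * ε * (1 + t) ∧
      |⟪w1, vb' (ε * t)⟫ - ⟪w1, wb (ε * t)⟫| ≤ C * ε * (1 + t) := by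
  refine ⟨2, by norm_num, ?_⟩
  intro ε hε b b' vb vb' wb wb' _ _ hbr _ hbr' _ hlb hlb' _ hu hu' _ t ht hcol hv hv'
  set T := ε * t with hTdef
  have hT : 0 ≤ T := mul_nonneg hε.le ht
  set x := b T - b' T with hxdef
  set d := wb T - wb' T with hddef
  have hxx : ⟪x, x⟫ = (4:ℝ) := by
    rw [real_inner_self_eq_norm_sq, hcol]; norm_num
  -- velocity bounds
  have hvb : ‖vb T‖ ≤ 1 := vel_norm_le hT hlb (hbr T hT)
  have hvb' : ‖vb' T‖ ≤ 1 := vel_norm_le hT hlb' (hbr' T hT)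
  -- ‖d‖ ≤ 2
  have hdiff : vb T - vb' T = d - (2⁻¹ * ⟪d, x⟫) • x := by
    rw [hv, hv']; module
  have hdsq : ⟪d, d⟫ = ⟪vb T - vb' T, vb T - vb' T⟫ := by
    rw [hdiff]
    simp only [inner_sub_left, inner_sub_right, real_inner_smul_left, real_inner_smul_right,
      real_inner_comm x d]
    linear_combination (-(⟪x, d⟫^2)/4) * hxx
  have hdnorm : ‖d‖ ≤ 2 := by
    have h1 : ‖d‖ ^ 2 = ‖vb T - vb' T‖ ^ 2 := by
      rw [← real_inner_self_eq_norm_sq, ← real_inner_self_eq_norm_sq]; exact hdsq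
    have h2 : ‖vb T - vb' T‖ ≤ 2 := by
      calc ‖vb T - vb' T‖ ≤ ‖vb T‖ + ‖vb' T‖ := norm_sub_le _ _
        _ ≤ 2 := by linarith
    nlinarith [norm_nonneg d, norm_nonneg (vb T - vb' T)]
  -- key quantity
  set r := w1 - ((4:ℝ)⁻¹ * ⟪w1, x⟫) • x with hrdef
  have hq1 : ⟪w1, vb T⟫ - ⟪w1, wb' T⟫ = ⟪d, r⟫ := by
    rw [hv, hrdef, hddef]
    simp only [inner_sub_left, inner_sub_right, real_inner_smul_left, real_inner_smul_right]
    linear_combination real_inner_comm w1 (wb' T) - real_inner_comm w1 (wb T)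
  have hq2 : ⟪w1, vb' T⟫ - ⟪w1, wb T⟫ = -⟪d, r⟫ := by
    rw [hv', hrdef, hddef]
    simp only [inner_add_right, inner_sub_left, inner_sub_right, real_inner_smul_left,
      real_inner_smul_right]
    linear_combination real_inner_comm w1 (wb T) - real_inner_comm w1 (wb' T)
  -- norm of r
  have hrr : ⟪r, r⟫ = ⟪u1, x⟫ ^ 2 / 4 := by
    have hp := parseval x
    rw [hxx] at hp
    rw [hrdef]
    simp only [inner_sub_left, inner_sub_right, real_inner_smul_left, real_inner_smul_right,
      real_inner_comm x w1, inner_w1_w1]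
    linear_combination ((⟪x, w1⟫ + ⟪w1, x⟫) * (1/2 - ⟪x, x⟫/16)) * (real_inner_comm x w1) + (⟪w1, x⟫^2/16) * hxx - (1/4 : ℝ) * hp
  have hrnorm : ‖r‖ ≤ |⟪u1, x⟫| / 2 := by
    have h1 : ‖r‖ ^ 2 = ⟪u1, x⟫ ^ 2 / 4 := by rw [← real_inner_self_eq_norm_sq]; exact hrr
    nlinarith [norm_nonneg r, abs_nonneg ⟪u1, x⟫, sq_abs ⟪u1, x⟫]
  -- bound on |⟪u1, x⟫|
  have hub : |⟪u1, x⟫| ≤ 2 * ε * (1 + t) := by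
    have hlb1 : ‖b T - b 0‖ ≤ ε * t := by
      have := (lipschitzOnWith_iff_dist_le_mul.mp hlb) T (Set.mem_Ici.mpr hT) 0 Set.self_mem_Ici
      rw [dist_eq_norm, Real.dist_eq] at this
      simpa [abs_of_nonneg hT] using this
    have hlb2 : ‖b' T - b' 0‖ ≤ ε * t := by
      have := (lipschitzOnWith_iff_dist_le_mul.mp hlb') T (Set.mem_Ici.mpr hT) 0 Set.self_mem_Ici
      rw [dist_eq_norm, Real.dist_eq] at this
      simpa [abs_of_nonneg hT] using this
    have e1 : |⟪u1, b T - b 0⟫| ≤ ε * t := by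
      calc |⟪u1, b T - b 0⟫| ≤ ‖u1‖ * ‖b T - b 0‖ := abs_real_inner_le_norm _ _
        _ ≤ ε * t := by rw [norm_u1, one_mul]; exact hlb1
    have e2 : |⟪u1, b' T - b' 0⟫| ≤ ε * t := by
      calc |⟪u1, b' T - b' 0⟫| ≤ ‖u1‖ * ‖b' T - b' 0‖ := abs_real_inner_le_norm _ _
        _ ≤ ε * t := by rw [norm_u1, one_mul]; exact hlb2
    have hsplit : ⟪u1, x⟫ = ⟪u1, b T - b 0⟫ + ⟪u1, b 0⟫ - ⟪u1, b' T - b' 0⟫ - ⟪u1, b' 0⟫ := by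
      rw [hxdef]
      simp only [inner_sub_right]
      ring
    rw [hsplit]
    have := abs_le.mp hu
    have := abs_le.mp hu'
    have := abs_le.mp e1
    have := abs_le.mp e2
    have hexp : 2 * ε * (1 + t) = 2 * ε + 2 * (ε * t) := by ring
    rw [abs_le]
    constructor <;> linarith
  -- conclusion
  have hmain : |⟪d, r⟫| ≤ 2 * ε * (1 + t) := by
    calc |⟪d, r⟫| ≤ ‖d‖ * ‖r‖ := abs_real_inner_le_norm _ _
      _ ≤ 2 * (|⟪u1, x⟫| / 2) := by
        apply mul_le_mul hdnorm hrnorm (norm_nonneg r) (by norm_num)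
      _ ≤ 2 * ε * (1 + t) := by linarith
  rw [hq1, hq2, abs_neg]
  exact ⟨hmain, hmain⟩


end
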